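/- Suppose n ≥ 2 and τ_1,…,τ_r ∈ 𝕋 have minimal wrap-around separation Δ(τ) with (n+1)Δ(τ) ≥ α for some α > 0. Then for every i, ∑_{j≠i} |F_N(τ_j − τ_i)| ≤ C_0 ((n+1)Δ(τ))^{-2}, where C_0 = (4/π²) α/α = 4/π² (taking β = 0 in the general constant C_0 = (4/π²)(α − 2β)^{-1} α). -/

import Mathlib

open Real

/-- The normalized Fejér kernel of order `N = 2n+1`:
`F_N(t) = (1/(n+1)) ∑_{k=-n}^{n} (1 - |k|/(n+1)) e^{i2πkt}`, written in its real (cosine) form. -/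
noncomputable def fejer (n : ℕ) (t : ℝ) : ℝ :=
  (1 / (n + 1)) * ∑ k ∈ Finset.Icc (-(n : ℤ)) n, (1 - |(k : ℝ)| / (n + 1)) * Real.cos (2 * π * k * t)

/-- The minimal wrap-around distance `Δ(τ) = min_{ℓ≠ℓ'} inf_{p∈ℤ} |τ_ℓ − τ_{ℓ'} + p|`. -/
noncomputable def sep {r : ℕ} (τ : Fin r → ℝ) : ℝ :=
  sInf {d : ℝ | ∃ (i j : Fin r) (p : ℤ), i ≠ j ∧ d = |τ i - τ j + p|}

lemma sin_cubic_lower {x : ℝ} (hx : 0 ≤ x) : x - x^3/6 ≤ Real.sin x := by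
  have hd : ∀ y : ℝ, HasDerivAt (fun z => Real.sin z - z + z^3/6)
      (Real.cos y - 1 + y^2/2) y := by
    intro y
    have h1 := (Real.hasDerivAt_sin y).sub (hasDerivAt_id y)
    have h2 := (hasDerivAt_pow 3 y).div_const 6
    have := h1.add h2
    exact this.congr_deriv (by ring)
  have hmono : Monotone (fun z => Real.sin z - z + z^3/6) := by
    apply monotone_of_deriv_nonneg
    · exact fun y => (hd y).differentiableAt
    · intro y
      rw [(hd y).deriv]
      nlinarith [Real.one_sub_sq_div_two_le_cos (x := y)]
  have := hmono hx
  simp at this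
  nlinarith [this]

lemma cos_quartic_upper {x : ℝ} (hx : 0 ≤ x) : Real.cos x ≤ 1 - x^2/2 + x^4/24 := by
  have hd : ∀ y : ℝ, HasDerivAt (fun z => 1 - z^2/2 + z^4/24 - Real.cos z)
      (-(y) + y^3/6 + Real.sin y) y := by
    intro y
    have h1 : HasDerivAt (fun z : ℝ => 1 - z^2/2 + z^4/24) (-(y) + y^3/6) y := by
      have h2 := ((hasDerivAt_pow 2 y).div_const 2)
      have h3 := ((hasDerivAt_pow 4 y).div_const 24)
      have := ((hasDerivAt_const y (1:ℝ)).sub h2).add h3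
      exact this.congr_deriv (by ring)
    have := h1.sub (Real.hasDerivAt_cos y)
    exact this.congr_deriv (by ring)
  have hmono : MonotoneOn (fun z => 1 - z^2/2 + z^4/24 - Real.cos z) (Set.Ici 0) := by
    apply monotoneOn_of_deriv_nonneg (convex_Ici 0)
    · exact (Continuous.continuousOn (by continuity))
    · intro y hy
      exact (hd y).differentiableAt.differentiableWithinAt
    · intro y hy
      rw [(hd y).deriv]
      simp only [Set.mem_Ioi, interior_Ici, Set.mem_Ioi] at hy
      nlinarith [sin_cubic_lower hy.le]
  have := hmono (Set.self_mem_Ici) hx hx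
  simp at this
  nlinarith [this]

lemma cube_ineq {θ : ℝ} (h0 : 0 ≤ θ) (h1 : θ ≤ π/2) : θ^3 * Real.cos θ ≤ Real.sin θ ^ 3 := by
  have hθ2 : θ ≤ 2 := by nlinarith [Real.pi_le_four]
  have hs : θ * (1 - θ^2/6) ≤ Real.sin θ := by nlinarith [sin_cubic_lower h0]
  have hsnn : 0 ≤ θ * (1 - θ^2/6) := by nlinarith
  have hcube : (θ * (1 - θ^2/6))^3 ≤ Real.sin θ ^ 3 := pow_le_pow_left₀ hsnn hs 3
  have hc := cos_quartic_upper h0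
  have h9 : (0:ℝ) ≤ 9 - θ^2 := by nlinarith
  have hA : θ^3 * Real.cos θ ≤ θ^3 * (1 - θ^2/2 + θ^4/24) :=
    mul_le_mul_of_nonneg_left hc (pow_nonneg h0 3)
  have hB : θ^3 * (1 - θ^2/2 + θ^4/24) ≤ (θ * (1 - θ^2/6))^3 := by
    nlinarith [mul_nonneg (mul_nonneg (pow_nonneg h0 3) (sq_nonneg (θ^2))) h9]
  linarith

lemma key_csc {θ : ℝ} (h0 : 0 < θ) (h1 : θ ≤ π/2) :
    1 / Real.sin θ ^ 2 ≤ 1 / θ^2 + (1 - 4/π^2) := by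
  have hsinpos : ∀ y ∈ Set.Icc θ (π/2), 0 < Real.sin y := by
    intro y hy
    apply Real.sin_pos_of_pos_of_lt_pi (lt_of_lt_of_le h0 hy.1)
    linarith [hy.2, Real.pi_pos]
  have hder : ∀ y ∈ Set.Icc θ (π/2), HasDerivAt (fun y : ℝ => 1 / Real.sin y ^ 2 - 1 / y^2)
      ((-(2 * Real.sin y * Real.cos y) / (Real.sin y ^ 2)^2) - (-(2*y) / (y^2)^2)) y := by
    intro y hy
    have hy0 : 0 < y := lt_of_lt_of_le h0 hy.1
    have hsy : 0 < Real.sin y := hsinpos y hy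
    have h1' : HasDerivAt (fun z => Real.sin z ^ 2) (2 * Real.sin y * Real.cos y) y := by
      have := (Real.hasDerivAt_sin y).pow 2
      exact this.congr_deriv (by ring)
    have h2' : HasDerivAt (fun z : ℝ => 1 / Real.sin z ^ 2)
        (-(2 * Real.sin y * Real.cos y) / (Real.sin y ^ 2)^2) y := by
      have := ((hasDerivAt_const y (1:ℝ)).div h1' (by positivity))
      exact this.congr_deriv (by ring)
    have h3' : HasDerivAt (fun z : ℝ => 1 / z^2) (-(2*y) / (y^2)^2) y := by
      have := ((hasDerivAt_const y (1:ℝ)).div (hasDerivAt_pow 2 y) (by positivity))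
      exact this.congr_deriv (by ring)
    exact h2'.sub h3'
  have hmono : MonotoneOn (fun y : ℝ => 1 / Real.sin y ^ 2 - 1 / y^2) (Set.Icc θ (π/2)) := by
    apply monotoneOn_of_deriv_nonneg (convex_Icc _ _)
    · intro y hy
      exact (hder y hy).continuousAt.continuousWithinAt
    · intro y hy
      rw [interior_Icc] at hy
      exact ((hder y ⟨hy.1.le, hy.2.le⟩).differentiableAt).differentiableWithinAt
    · intro y hy
      rw [interior_Icc] at hy
      have hy' : y ∈ Set.Icc θ (π/2) := ⟨hy.1.le, hy.2.le⟩
      rw [(hder y hy').deriv]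
      have hy0 : 0 < y := lt_of_lt_of_le h0 hy'.1
      have hsy : 0 < Real.sin y := hsinpos y hy'
      have hcube := cube_ineq hy0.le hy'.2
      rw [div_sub_div _ _ (by positivity) (by positivity)]
      apply div_nonneg _ (by positivity)
      nlinarith [hcube, mul_pos hsy hy0]
  have hmem1 : θ ∈ Set.Icc θ (π/2) := ⟨le_refl _, h1⟩
  have hmem2 : π/2 ∈ Set.Icc θ (π/2) := ⟨h1, le_refl _⟩
  have := hmono hmem1 hmem2 h1
  simp only [Real.sin_pi_div_two] at this
  have hπ : (0:ℝ) < π := Real.pi_pos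
  have : 1 / Real.sin θ ^ 2 - 1 / θ^2 ≤ 1 - 4/π^2 := by
    rw [show (1:ℝ) - 4/π^2 = 1/1^2 - 1/(π/2)^2 by ring]
    exact this
  linarith

lemma csc_bound {x : ℝ} (h0 : 0 < x) (h1 : x < 1) :
    1 / Real.sin (π * x) ^ 2 ≤ 1/π^2 * (1/x^2 + 1/(1-x)^2) + (1 - 4/π^2) := by
  have hπ : (0:ℝ) < π := Real.pi_pos
  have hx2 : 0 < 1 - x := by linarith
  rcases le_or_gt x (1/2) with hx | hx
  · have := key_csc (θ := π * x) (by positivity) (by nlinarith)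
    have he : 1 / (π*x)^2 = 1/π^2 * (1/x^2) := by field_simp
    rw [he] at this
    have hpos : 0 ≤ 1/π^2 * (1/(1-x)^2) := by positivity
    linarith
  · have hsin : Real.sin (π * x) = Real.sin (π * (1 - x)) := by
      rw [show π * (1-x) = π - π * x by ring, Real.sin_pi_sub]
    have := key_csc (θ := π * (1 - x)) (by positivity) (by nlinarith)
    have he : 1 / (π*(1-x))^2 = 1/π^2 * (1/(1-x)^2) := by field_simp
    rw [he] at this
    rw [hsin]
    have hpos : 0 ≤ 1/π^2 * (1/x^2) := by positivity
    linarith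

-- Dirichlet kernel identity
lemma dirichlet_id (θ : ℝ) : ∀ m : ℕ,
    Real.sin θ * (2 * ∑ k ∈ Finset.range (m+1), Real.cos (2 * k * θ) - 1)
      = Real.sin ((2 * m + 1) * θ) := by
  intro m
  induction m with
  | zero => simp; ring_nf
  | succ m ih =>
    rw [Finset.sum_range_succ]
    have h1 : Real.sin ((2 * (m+1) + 1) * θ) - Real.sin ((2 * m + 1) * θ)
        = 2 * Real.cos (2 * (m+1) * θ) * Real.sin θ := by
      have e1 : ((2 * ((m:ℝ)+1) + 1) * θ) = 2 * ((m:ℝ)+1) * θ + θ := by ring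
      have e2 : ((2 * (m:ℝ) + 1) * θ) = 2 * ((m:ℝ)+1) * θ - θ := by ring
      rw [e1, e2, Real.sin_add, Real.sin_sub]
      ring
    push_cast
    push_cast at ih
    nlinarith [h1, ih]

lemma sin_sq_diff (A B : ℝ) :
    Real.sin (A + B) ^ 2 - Real.sin A ^ 2 = Real.sin (2*A + B) * Real.sin B := by
  rw [show 2*A+B = (A+B)+A by ring, Real.sin_add (A+B) A, Real.sin_add A B, Real.cos_add A B]
  linear_combination (Real.sin A)^2 * (Real.sin_sq_add_cos_sq B)

-- Fejér core identity
lemma fejer_core (θ : ℝ) : ∀ m : ℕ,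
    Real.sin θ ^ 2 * (2 * ∑ k ∈ Finset.range (m+1), (((m:ℝ)+1-k)) * Real.cos (2 * k * θ) - ((m:ℝ)+1))
      = Real.sin (((m:ℝ)+1) * θ) ^ 2 := by
  intro m
  induction m with
  | zero => simp; ring_nf
  | succ m ih =>
    have hsum : ∑ k ∈ Finset.range (m+1+1), (((m:ℝ)+1+1-k)) * Real.cos (2 * k * θ)
        = (∑ k ∈ Finset.range (m+1), (((m:ℝ)+1-k)) * Real.cos (2 * k * θ))
          + ∑ k ∈ Finset.range (m+1+1), Real.cos (2 * k * θ) := by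
      rw [show (∑ k ∈ Finset.range (m+1+1), (((m:ℝ)+1+1-k)) * Real.cos (2 * k * θ))
          = ∑ k ∈ Finset.range (m+1+1), ((((m:ℝ)+1-k)) * Real.cos (2 * k * θ) + Real.cos (2 * k * θ))
          from Finset.sum_congr rfl (by intro k _; ring),
        Finset.sum_add_distrib, Finset.sum_range_succ (n := m+1)
          (f := fun k => (((m:ℝ)+1-k)) * Real.cos (2 * k * θ))]
      push_cast
      ring
    have hdir := dirichlet_id θ (m+1)
    push_cast at hdir
    have hsq : Real.sin (((m:ℝ)+1+1) * θ) ^ 2 - Real.sin (((m:ℝ)+1) * θ) ^ 2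
        = Real.sin (2 * ((m:ℝ)+1) * θ + θ) * Real.sin θ := by
      have := sin_sq_diff (((m:ℝ)+1) * θ) θ
      rw [show (((m:ℝ)+1) * θ + θ) = ((m:ℝ)+1+1) * θ by ring] at this
      rw [this]
      ring_nf
    have hdir' : Real.sin (2 * ((m:ℝ)+1) * θ + θ) = Real.sin ((2 * ((m:ℝ) + 1) + 1) * θ) := by
      ring_nf
    push_cast
    linear_combination (2 * Real.sin θ^2) * hsum + ih + Real.sin θ * hdir - hsq
      - Real.sin θ * hdir'

lemma Icc_sum_even (f : ℤ → ℝ) (hf : ∀ k, f (-k) = f k) : ∀ n : ℕ,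
    ∑ k ∈ Finset.Icc (-(n:ℤ)) n, f k = 2 * ∑ k ∈ Finset.range (n+1), f k - f 0 := by
  intro n
  induction n with
  | zero => simp; ring
  | succ n ih =>
    have hset : Finset.Icc (-((n:ℤ)+1)) ((n:ℤ)+1)
        = insert (-((n:ℤ)+1)) (insert ((n:ℤ)+1) (Finset.Icc (-(n:ℤ)) n)) := by
      ext k
      simp only [Finset.mem_Icc, Finset.mem_insert]
      omega
    have h1 : ((n:ℤ)+1) ∉ Finset.Icc (-(n:ℤ)) (n:ℤ) := by
      simp only [Finset.mem_Icc]; omega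
    have h2 : (-((n:ℤ)+1)) ∉ insert ((n:ℤ)+1) (Finset.Icc (-(n:ℤ)) (n:ℤ)) := by
      simp only [Finset.mem_insert, Finset.mem_Icc]; omega
    have hneg : f (-((n:ℤ)+1)) = f ((n:ℤ)+1) := hf ((n:ℤ)+1)
    rw [show (-(((n:ℕ)+1:ℕ)):ℤ) = -((n:ℤ)+1) by push_cast; ring,
      show ((((n:ℕ)+1:ℕ)):ℤ) = ((n:ℤ)+1) by push_cast; ring,
      hset, Finset.sum_insert h2, Finset.sum_insert h1, ih, hneg,
      Finset.sum_range_succ (f := fun k : ℕ => f ↑k) (n := n+1)]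
    push_cast
    ring

lemma fejer_eq (n : ℕ) (t : ℝ) :
    Real.sin (π * t) ^ 2 * ((((n:ℝ)+1)^2) * fejer n t) = Real.sin (((n:ℝ)+1) * (π * t)) ^ 2 := by
  have hne : ((n:ℝ) + 1) ≠ 0 := by positivity
  have hf : ∀ k : ℤ, (fun k : ℤ => (1 - |(k : ℝ)| / ((n:ℝ) + 1)) * Real.cos (2 * π * (k:ℝ) * t)) (-k)
      = (fun k : ℤ => (1 - |(k : ℝ)| / ((n:ℝ) + 1)) * Real.cos (2 * π * (k:ℝ) * t)) k := by
    intro k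
    simp only
    push_cast
    rw [abs_neg, show 2 * π * (-(k:ℝ)) * t = -(2 * π * (k:ℝ) * t) by ring, Real.cos_neg]
  have heven := Icc_sum_even (fun k : ℤ => (1 - |(k : ℝ)| / ((n:ℝ) + 1)) * Real.cos (2 * π * (k:ℝ) * t)) hf n
  have hterm : ∀ k ∈ Finset.range (n+1),
      (1 - |(((k:ℕ):ℤ) : ℝ)| / ((n:ℝ) + 1)) * Real.cos (2 * π * (((k:ℕ):ℤ):ℝ) * t)
      = (1/((n:ℝ)+1)) * ((((n:ℝ)+1-k)) * Real.cos (2 * (k:ℝ) * (π * t))) := by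
    intro k _
    have h1 : |(((k:ℕ):ℤ) : ℝ)| = (k:ℝ) := by
      push_cast
      exact abs_of_nonneg (by positivity)
    have h2 : (2 * π * (((k:ℕ):ℤ):ℝ) * t) = 2 * (k:ℝ) * (π * t) := by push_cast; ring
    rw [h1, h2]
    field_simp
  rw [Finset.sum_congr rfl hterm] at heven
  have hzero : (1 - |((0:ℤ) : ℝ)| / ((n:ℝ) + 1)) * Real.cos (2 * π * ((0:ℤ):ℝ) * t) = 1 := by
    norm_num
  rw [hzero, ← Finset.mul_sum] at heven
  have hsum : (((n:ℝ)+1)^2) * fejer n t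
      = 2 * ∑ k ∈ Finset.range (n+1), (((n:ℝ)+1-k)) * Real.cos (2 * k * (π * t)) - (((n:ℝ)+1)) := by
    rw [fejer, heven]
    push_cast
    field_simp
    exact congrArg (fun s => 2 * s - ((n:ℝ)+1)) (Finset.sum_congr rfl fun k _ => by ring)
  rw [hsum]
  exact fejer_core (π * t) n

lemma sep_sum {ι : Type*} [DecidableEq ι] (Δ : ℝ) (hΔ : 0 < Δ) :
    ∀ (m : ℕ) (s : Finset ι) (x : ι → ℝ) (k : ℕ), s.card = m →
    (∀ j ∈ s, ((k:ℝ)+1)*Δ ≤ x j) →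
    (∀ j ∈ s, ∀ j' ∈ s, j ≠ j' → Δ ≤ |x j - x j'|) →
    ∑ j ∈ s, (x j)⁻¹^2 ≤ ∑ t ∈ Finset.range m, ((((k:ℝ)+1+t)*Δ)⁻¹)^2 := by
  intro m
  induction m with
  | zero =>
    intro s x k hcard _ _
    rw [Finset.card_eq_zero] at hcard
    simp [hcard]
  | succ m ih =>
    intro s x k hcard hlow hsep
    have hne : s.Nonempty := Finset.card_pos.mp (by omega)
    obtain ⟨j₀, hj₀, hmin⟩ := s.exists_min_image x hne
    have hxj₀ : ((k:ℝ)+1)*Δ ≤ x j₀ := hlow j₀ hj₀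
    have hxj₀pos : 0 < x j₀ := lt_of_lt_of_le (by positivity) hxj₀
    have hcard' : (s.erase j₀).card = m := by
      rw [Finset.card_erase_of_mem hj₀, hcard]; omega
    have hlow' : ∀ j ∈ s.erase j₀, (((k+1:ℕ):ℝ)+1)*Δ ≤ x j := by
      intro j hj
      have hjs := Finset.mem_of_mem_erase hj
      have hjne : j ≠ j₀ := Finset.ne_of_mem_erase hj
      have h1 := hmin j hjs
      have h2 := hsep j hjs j₀ hj₀ hjne
      have : Δ ≤ x j - x j₀ := by
        rcases abs_cases (x j - x j₀) with ⟨he, _⟩ | ⟨he, _⟩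
        · linarith [h2, he.symm.le]
        · linarith [h2, he.symm.le]
      push_cast
      linarith
    have hsep' : ∀ j ∈ s.erase j₀, ∀ j' ∈ s.erase j₀, j ≠ j' → Δ ≤ |x j - x j'| :=
      fun j hj j' hj' hne' => hsep j (Finset.mem_of_mem_erase hj) j' (Finset.mem_of_mem_erase hj') hne'
    have hIH := ih (s.erase j₀) x (k+1) hcard' hlow' hsep'
    have hsplit : ∑ j ∈ s, (x j)⁻¹^2 = ∑ j ∈ s.erase j₀, (x j)⁻¹^2 + (x j₀)⁻¹^2 :=
      (Finset.sum_erase_add s _ hj₀).symm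
    have hterm : (x j₀)⁻¹^2 ≤ ((((k:ℝ)+1)*Δ)⁻¹)^2 := by
      have h1 : (((k:ℝ)+1)*Δ)⁻¹ ≥ (x j₀)⁻¹ := by
        apply inv_anti₀ (by positivity) hxj₀
      have h2 : 0 ≤ (x j₀)⁻¹ := by positivity
      exact pow_le_pow_left₀ h2 h1 2
    have hRHS := Finset.sum_range_succ' (fun t : ℕ => ((((k:ℝ)+1+t)*Δ)⁻¹)^2) m
    have hmatch : ∑ t ∈ Finset.range m, (((((k+1:ℕ):ℝ))+1+(t:ℝ))*Δ)⁻¹^2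
        = ∑ t ∈ Finset.range m, ((((k:ℝ)+1+((t:ℕ)+1:ℕ))*Δ)⁻¹)^2 := by
      apply Finset.sum_congr rfl
      intro t _
      push_cast
      ring_nf
    rw [hsplit, hRHS]
    rw [hmatch] at hIH
    have hz : ((((k:ℝ)+1+(0:ℕ))*Δ)⁻¹)^2 = ((((k:ℝ)+1)*Δ)⁻¹)^2 := by norm_num
    rw [hz]
    linarith [hIH, hterm]

lemma chain_max {ι : Type*} [DecidableEq ι] (Δ : ℝ) (hΔ : 0 < Δ) :
    ∀ (m : ℕ) (s : Finset ι) (x : ι → ℝ) (c : ℝ), s.card = m + 1 →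
    (∀ j ∈ s, c ≤ x j) →
    (∀ j ∈ s, ∀ j' ∈ s, j ≠ j' → Δ ≤ |x j - x j'|) →
    ∃ j ∈ s, c + m * Δ ≤ x j := by
  intro m
  induction m with
  | zero =>
    intro s x c hcard hlow _
    have hne : s.Nonempty := Finset.card_pos.mp (by omega)
    obtain ⟨j, hj⟩ := hne
    exact ⟨j, hj, by simpa using hlow j hj⟩
  | succ m ih =>
    intro s x c hcard hlow hsep
    have hne : s.Nonempty := Finset.card_pos.mp (by omega)
    obtain ⟨j₀, hj₀, hmin⟩ := s.exists_min_image x hne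
    have hcard' : (s.erase j₀).card = m + 1 := by
      rw [Finset.card_erase_of_mem hj₀, hcard]; omega
    have hlow' : ∀ j ∈ s.erase j₀, c + Δ ≤ x j := by
      intro j hj
      have hjs := Finset.mem_of_mem_erase hj
      have hjne : j ≠ j₀ := Finset.ne_of_mem_erase hj
      have h1 := hmin j hjs
      have h2 := hsep j hjs j₀ hj₀ hjne
      have : Δ ≤ x j - x j₀ := by
        rcases abs_cases (x j - x j₀) with ⟨he, _⟩ | ⟨he, _⟩
        · linarith [h2, he.symm.le]
        · linarith [h2, he.symm.le]
      linarith [hlow j₀ hj₀]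
    have hsep' : ∀ j ∈ s.erase j₀, ∀ j' ∈ s.erase j₀, j ≠ j' → Δ ≤ |x j - x j'| :=
      fun j hj j' hj' hne' => hsep j (Finset.mem_of_mem_erase hj) j' (Finset.mem_of_mem_erase hj') hne'
    obtain ⟨j, hj, hxj⟩ := ih (s.erase j₀) x (c + Δ) hcard' hlow' hsep'
    refine ⟨j, Finset.mem_of_mem_erase hj, ?_⟩
    push_cast
    linarith

lemma basel_partial (m : ℕ) :
    ∑ t ∈ Finset.range m, (((t:ℝ)+1)⁻¹)^2 ≤ π^2/6 := by
  have h := hasSum_zeta_two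
  have heq : ∑ t ∈ Finset.range (m+1), (1:ℝ)/(t:ℝ)^2
      = ∑ t ∈ Finset.range m, (((t:ℝ)+1)⁻¹)^2 := by
    rw [Finset.sum_range_succ' (fun t : ℕ => (1:ℝ)/((t:ℕ):ℝ)^2) m]
    norm_num
  rw [← heq]
  exact sum_le_hasSum _ (fun i _ => by positivity) h

set_option maxHeartbeats 1000000 in
lemma numeric (m : ℕ) (Δ : ℝ) (hΔ : 0 < Δ) (hm : 1 ≤ m) (h1 : ((m:ℝ)+1)*Δ ≤ 1) :
    2/π^2 * (∑ t ∈ Finset.range m, (((t:ℝ)+1)⁻¹)^2) + (1 - 4/π^2) * m * Δ^2 ≤ 4/π^2 := by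
  have hπ := Real.pi_pos
  have hπlt : π < 3.1416 := by linarith [Real.pi_lt_d6]
  have hπgt : 3.1415 < π := by linarith [Real.pi_gt_d6]
  have hP1 : π^2 < 9.87 := by nlinarith
  have hP2 : 9.8 < π^2 := by nlinarith
  have hy1 : (0.1013:ℝ) ≤ (π^2)⁻¹ := by
    rw [le_inv_comm₀ (by norm_num) (by positivity)]
    nlinarith
  have hy2 : (π^2)⁻¹ ≤ (0.1021:ℝ) := by
    rw [inv_le_comm₀ (by positivity) (by norm_num)]
    nlinarith
  have hb : 0 ≤ 1 - 4*(π^2)⁻¹ := by nlinarith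
  have hmd : (m:ℝ) * Δ^2 ≤ (m:ℝ)/((m:ℝ)+1)^2 := by
    have hm0 : (0:ℝ) ≤ (m:ℝ) := Nat.cast_nonneg m
    have hΔle : Δ ≤ 1/((m:ℝ)+1) := by
      rw [le_div_iff₀ (by positivity)]; linarith
    have h2 : Δ^2 ≤ (1/((m:ℝ)+1))^2 := pow_le_pow_left₀ hΔ.le hΔle 2
    calc (m:ℝ)*Δ^2 ≤ (m:ℝ)*(1/((m:ℝ)+1))^2 := by nlinarith
    _ = (m:ℝ)/((m:ℝ)+1)^2 := by field_simp
  simp only [div_eq_mul_inv, one_mul]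
  rcases le_or_gt m 6 with hm6 | hm7
  · interval_cases m <;>
    · norm_num [Finset.sum_range_succ] at hmd ⊢
      nlinarith [mul_le_mul_of_nonneg_left hmd hb, hy1, hy2, sq_nonneg Δ]
  · have hq7 : (m:ℝ)/((m:ℝ)+1)^2 ≤ 7/64 := by
      have hm7' : (7:ℝ) ≤ (m:ℝ) := by exact_mod_cast hm7
      rw [div_le_iff₀ (by positivity)]
      nlinarith
    have hS := basel_partial m
    have hyp : (π^2)⁻¹ * π^2 = 1 := inv_mul_cancel₀ (by positivity)
    have hmd2 : (m:ℝ) * Δ^2 ≤ 7/64 := le_trans hmd hq7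
    have hSnn : 0 ≤ ∑ t ∈ Finset.range m, (((t:ℝ)+1)⁻¹)^2 :=
      Finset.sum_nonneg (fun t _ => by positivity)
    nlinarith [hS, hmd2, hy1, hy2, hb, hyp, hSnn,
      mul_le_mul_of_nonneg_left hS (by positivity : (0:ℝ) ≤ 2*(π^2)⁻¹),
      mul_le_mul_of_nonneg_left hmd2 hb]

theorem sum_abs_fejer_le (n r : ℕ) (hn : 2 ≤ n) (τ : Fin r → ℝ) (α : ℝ) (hα : 0 < α)
    (hsep : α ≤ ((n : ℝ) + 1) * sep τ) (i : Fin r) :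
    ∑ j ∈ Finset.univ.erase i, |fejer n (τ j - τ i)| ≤
      (4 / π ^ 2) * (((n : ℝ) + 1) * sep τ)⁻¹ ^ 2 := by
  have hπ := Real.pi_pos
  set Δ := sep τ with hΔdef
  have hn1 : (0:ℝ) < (n:ℝ) + 1 := by positivity
  have hΔpos : 0 < Δ := by nlinarith
  -- lower bound property of sInf
  have hlb : ∀ (a b : Fin r), a ≠ b → ∀ p : ℤ, Δ ≤ |τ a - τ b + p| := by
    intro a b hab p
    apply csInf_le
    · exact ⟨0, by rintro d ⟨i', j', p', hij', rfl⟩; positivity⟩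
    · exact ⟨a, b, p, hab, rfl⟩
  set P := Finset.univ.erase i with hP
  set m := P.card with hm
  rcases Nat.eq_zero_or_pos m with hm0 | hmpos
  · rw [Finset.card_eq_zero] at hm0
    rw [hm0, Finset.sum_empty]
    positivity
  -- the fractional parts
  set x : Fin r → ℝ := fun j => Int.fract (τ j - τ i) with hx
  have hfract : ∀ j : Fin r, x j = τ j - τ i - ⌊τ j - τ i⌋ := fun j => rfl
  have hxlow : ∀ j ∈ P, Δ ≤ x j := by
    intro j hj
    have hji : j ≠ i := Finset.ne_of_mem_erase hj
    have := hlb j i hji (-⌊τ j - τ i⌋)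
    rw [show (τ j - τ i + ((-⌊τ j - τ i⌋ : ℤ) : ℝ)) = x j by rw [hfract]; push_cast; ring] at this
    rwa [abs_of_nonneg (Int.fract_nonneg _)] at this
  have hxhigh : ∀ j ∈ P, x j ≤ 1 - Δ := by
    intro j hj
    have hji : j ≠ i := Finset.ne_of_mem_erase hj
    have := hlb j i hji (-⌊τ j - τ i⌋ - 1)
    rw [show (τ j - τ i + ((-⌊τ j - τ i⌋ - 1 : ℤ) : ℝ)) = x j - 1 by
      rw [hfract]; push_cast; ring] at this
    have hlt : x j - 1 < 0 := by linarith [Int.fract_lt_one (τ j - τ i)]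
    rw [abs_of_neg hlt] at this
    linarith
  have hxsep : ∀ j ∈ P, ∀ j' ∈ P, j ≠ j' → Δ ≤ |x j - x j'| := by
    intro j hj j' hj' hne
    have := hlb j j' hne (⌊τ j' - τ i⌋ - ⌊τ j - τ i⌋)
    rw [show (τ j - τ j' + ((⌊τ j' - τ i⌋ - ⌊τ j - τ i⌋ : ℤ) : ℝ)) = x j - x j' by
      rw [hfract, hfract]; push_cast; ring] at this
    exact this
  have hx01 : ∀ j ∈ P, 0 < x j ∧ x j < 1 := by
    intro j hj
    constructor
    · linarith [hxlow j hj]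
    · linarith [hxhigh j hj]
  have hsinpos : ∀ j ∈ P, 0 < Real.sin (π * x j) := by
    intro j hj
    obtain ⟨h0, h1⟩ := hx01 j hj
    apply Real.sin_pos_of_pos_of_lt_pi (by positivity)
    nlinarith
  -- per-term bound by csc^2
  have hfej : ∀ j ∈ P, |fejer n (τ j - τ i)| ≤
      (((n:ℝ)+1)^2)⁻¹ * (1 / Real.sin (π * x j) ^ 2) := by
    intro j hj
    have hsin : Real.sin (π * (τ j - τ i)) ^ 2 = Real.sin (π * x j) ^ 2 := by
      have : π * (τ j - τ i) = π * x j + (⌊τ j - τ i⌋ : ℤ) * π := by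
        rw [hfract]; push_cast; ring
      rw [this, Real.sin_add_int_mul_pi, mul_pow]
      have : ((-1 : ℝ) ^ (⌊τ j - τ i⌋ : ℤ)) ^ 2 = 1 := by
        rw [← zpow_natCast (((-1:ℝ)) ^ (⌊τ j - τ i⌋ : ℤ)), ← zpow_mul]
        rw [show (⌊τ j - τ i⌋ : ℤ) * ((2:ℕ):ℤ) = 2 * ⌊τ j - τ i⌋ by ring, zpow_mul]
        norm_num
      rw [this, one_mul]
    have hid := fejer_eq n (τ j - τ i)
    rw [hsin] at hid
    have hs2 : 0 < Real.sin (π * x j) ^ 2 := pow_pos (hsinpos j hj) 2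
    have hfv : fejer n (τ j - τ i)
        = Real.sin (((n:ℝ)+1) * (π * (τ j - τ i))) ^ 2 / (Real.sin (π * x j) ^ 2 * (((n:ℝ)+1)^2)) := by
      rw [eq_div_iff (by positivity)]
      linear_combination hid
    have hnn : 0 ≤ fejer n (τ j - τ i) := by
      rw [hfv]; positivity
    rw [abs_of_nonneg hnn, hfv]
    rw [div_le_iff₀ (by positivity)]
    have hb1 : Real.sin (((n:ℝ)+1) * (π * (τ j - τ i))) ^ 2 ≤ 1 := Real.sin_sq_le_one _
    calc Real.sin (((n:ℝ)+1) * (π * (τ j - τ i))) ^ 2 ≤ 1 := hb1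
    _ = (((n:ℝ)+1)^2)⁻¹ * (1 / Real.sin (π * x j) ^ 2) * (Real.sin (π * x j) ^ 2 * (((n:ℝ)+1)^2)) := by
        field_simp
        rw [div_self (hsinpos j hj).ne']
  have hcsc : ∀ j ∈ P, 1 / Real.sin (π * x j) ^ 2
      ≤ 1/π^2 * (1/(x j)^2 + 1/(1 - x j)^2) + (1 - 4/π^2) := by
    intro j hj
    obtain ⟨h0, h1⟩ := hx01 j hj
    exact csc_bound h0 h1
  -- sum the two separated families
  have hA : ∑ j ∈ P, (x j)⁻¹^2 ≤ (Δ⁻¹)^2 * ∑ t ∈ Finset.range m, (((t:ℝ)+1)⁻¹)^2 := by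
    have := sep_sum Δ hΔpos m P x 0 rfl
      (by intro j hj; have := hxlow j hj; push_cast; linarith) hxsep
    calc ∑ j ∈ P, (x j)⁻¹^2 ≤ ∑ t ∈ Finset.range m, ((((0:ℕ):ℝ)+1+t)*Δ)⁻¹^2 := this
    _ = (Δ⁻¹)^2 * ∑ t ∈ Finset.range m, (((t:ℝ)+1)⁻¹)^2 := by
        rw [Finset.mul_sum]
        apply Finset.sum_congr rfl
        intro t _
        rw [mul_inv, mul_pow]
        push_cast
        ring
  have hB : ∑ j ∈ P, (1 - x j)⁻¹^2 ≤ (Δ⁻¹)^2 * ∑ t ∈ Finset.range m, (((t:ℝ)+1)⁻¹)^2 := by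
    have := sep_sum Δ hΔpos m P (fun j => 1 - x j) 0 rfl
      (by intro j hj; simpa using (show Δ ≤ 1 - x j by linarith [hxhigh j hj]))
      (by intro j hj j' hj' hne;
          have := hxsep j hj j' hj' hne
          rw [show (1 - x j) - (1 - x j') = -(x j - x j') by ring, abs_neg]
          exact this)
    calc ∑ j ∈ P, (1 - x j)⁻¹^2 ≤ ∑ t ∈ Finset.range m, ((((0:ℕ):ℝ)+1+t)*Δ)⁻¹^2 := this
    _ = (Δ⁻¹)^2 * ∑ t ∈ Finset.range m, (((t:ℝ)+1)⁻¹)^2 := by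
        rw [Finset.mul_sum]
        apply Finset.sum_congr rfl
        intro t _
        rw [mul_inv, mul_pow]
        push_cast
        ring
  -- (m+1) Δ ≤ 1
  have hmΔ : ((m:ℝ)+1)*Δ ≤ 1 := by
    obtain ⟨m', hm'⟩ : ∃ m', m = m' + 1 := ⟨m - 1, by omega⟩
    obtain ⟨j, hj, hxj⟩ := chain_max Δ hΔpos m' P x Δ (by rw [← hm']) hxlow hxsep
    have := hxhigh j hj
    rw [hm']
    push_cast
    linarith
  -- numeric conclusion
  have hnum := numeric m Δ hΔpos hmpos hmΔ
  -- put everything together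
  have hsum1 : ∑ j ∈ P, |fejer n (τ j - τ i)|
      ≤ (((n:ℝ)+1)^2)⁻¹ * ∑ j ∈ P, (1/π^2 * (1/(x j)^2 + 1/(1 - x j)^2) + (1 - 4/π^2)) := by
    rw [Finset.mul_sum]
    apply Finset.sum_le_sum
    intro j hj
    calc |fejer n (τ j - τ i)| ≤ (((n:ℝ)+1)^2)⁻¹ * (1 / Real.sin (π * x j) ^ 2) := hfej j hj
    _ ≤ (((n:ℝ)+1)^2)⁻¹ * (1/π^2 * (1/(x j)^2 + 1/(1 - x j)^2) + (1 - 4/π^2)) := by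
        apply mul_le_mul_of_nonneg_left (hcsc j hj) (by positivity)
  have hsum2 : ∑ j ∈ P, (1/π^2 * (1/(x j)^2 + 1/(1 - x j)^2) + (1 - 4/π^2))
      = 1/π^2 * (∑ j ∈ P, (x j)⁻¹^2 + ∑ j ∈ P, (1 - x j)⁻¹^2) + (m:ℝ) * (1 - 4/π^2) := by
    rw [show (∑ j ∈ P, (1/π^2 * (1/(x j)^2 + 1/(1 - x j)^2) + (1 - 4/π^2)))
        = ∑ j ∈ P, (1/π^2 * ((x j)⁻¹^2 + (1 - x j)⁻¹^2) + (1 - 4/π^2)) from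
      Finset.sum_congr rfl (fun j _ => by simp [one_div, inv_pow]),
      Finset.sum_add_distrib, Finset.sum_const, nsmul_eq_mul, ← Finset.mul_sum,
      Finset.sum_add_distrib]
  have hbnn : (0:ℝ) ≤ 1 - 4/π^2 := by
    rw [sub_nonneg, div_le_one (by positivity)]
    nlinarith [Real.pi_gt_d6]
  have hS : 1/π^2 * (∑ j ∈ P, (x j)⁻¹^2 + ∑ j ∈ P, (1 - x j)⁻¹^2) + (m:ℝ) * (1 - 4/π^2)
      ≤ (Δ⁻¹)^2 * (4/π^2) := by
    have hΔinv : (0:ℝ) < (Δ⁻¹)^2 := by positivity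
    have hnum' := mul_le_mul_of_nonneg_left hnum (le_of_lt hΔinv)
    have hc : (Δ⁻¹)^2 * ((1 - 4/π^2) * (m:ℝ) * Δ^2) = (m:ℝ) * (1 - 4/π^2) := by
      field_simp
    calc 1/π^2 * (∑ j ∈ P, (x j)⁻¹^2 + ∑ j ∈ P, (1 - x j)⁻¹^2) + (m:ℝ) * (1 - 4/π^2)
        ≤ 1/π^2 * (2 * (Δ⁻¹)^2 * ∑ t ∈ Finset.range m, (((t:ℝ)+1)⁻¹)^2) + (m:ℝ) * (1 - 4/π^2) := by
          have h2 : (0:ℝ) ≤ 1/π^2 := by positivity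
          have h3 := mul_le_mul_of_nonneg_left (add_le_add hA hB) h2
          linarith
    _ = (Δ⁻¹)^2 * (2/π^2 * ∑ t ∈ Finset.range m, (((t:ℝ)+1)⁻¹)^2)
          + (Δ⁻¹)^2 * ((1 - 4/π^2) * (m:ℝ) * Δ^2) := by rw [hc]; ring
    _ ≤ (Δ⁻¹)^2 * (4/π^2) := by
          rw [← mul_add]
          apply mul_le_mul_of_nonneg_left _ (le_of_lt hΔinv)
          exact hnum
  have hfinal : (((n:ℝ)+1)^2)⁻¹ * ((Δ⁻¹)^2 * (4/π^2))
      = (4 / π ^ 2) * ((((n:ℝ)+1) * Δ)⁻¹)^2 := by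
    rw [mul_inv, mul_pow, ← inv_pow ((n:ℝ)+1) 2]
    ring
  calc ∑ j ∈ P, |fejer n (τ j - τ i)|
      ≤ (((n:ℝ)+1)^2)⁻¹ * ∑ j ∈ P, (1/π^2 * (1/(x j)^2 + 1/(1 - x j)^2) + (1 - 4/π^2)) := hsum1
  _ = (((n:ℝ)+1)^2)⁻¹ * (1/π^2 * (∑ j ∈ P, (x j)⁻¹^2 + ∑ j ∈ P, (1 - x j)⁻¹^2)
        + (m:ℝ) * (1 - 4/π^2)) := by rw [hsum2]
  _ ≤ (((n:ℝ)+1)^2)⁻¹ * ((Δ⁻¹)^2 * (4/π^2)) := by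
        apply mul_le_mul_of_nonneg_left hS (by positivity)
  _ = (4 / π ^ 2) * ((((n:ℝ)+1) * Δ)⁻¹)^2 := hfinal
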